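/- Fix L > 0, x > 0, W > 0, D > 0 and μ ≥ 0. The function v(t) = x·[2^{L/(x·t)} − (L/(x·t))·(ln 2)·2^{L/(x·t)} − 1] + μ·W/(D − t)² is strictly monotonically increasing on the interval (0, D). (Hence, in the Computing resource Allocation Algorithm, for each multiplier μ the KKT equation v(t) = 0 has at most one root in (0, D) and can be solved by bisection.) -/

import Mathlib

private lemma g_strictAntiOn :
    StrictAntiOn (fun u : ℝ => (1 - Real.log 2 * u) * Real.exp (Real.log 2 * u) - 1)
      (Set.Ioi (0 : ℝ)) := by
  have hc : 0 < Real.log 2 := Real.log_pos one_lt_two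
  apply strictAntiOn_of_deriv_neg (convex_Ioi 0)
  · fun_prop
  · intro u hu
    rw [interior_Ioi] at hu
    have h1 : HasDerivAt (fun u : ℝ => Real.log 2 * u) (Real.log 2) u := by
      simpa using (hasDerivAt_id u).const_mul (Real.log 2)
    have h2 : HasDerivAt (fun u : ℝ => Real.exp (Real.log 2 * u))
        (Real.exp (Real.log 2 * u) * Real.log 2) u := h1.exp
    have h3 : HasDerivAt (fun u : ℝ => 1 - Real.log 2 * u) (-Real.log 2) u := by
      have := (hasDerivAt_const u (1:ℝ)).sub h1
      rw [zero_sub] at this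
      exact this
    have h4 : HasDerivAt
        (fun u : ℝ => (1 - Real.log 2 * u) * Real.exp (Real.log 2 * u) - 1)
        (-Real.log 2 * Real.exp (Real.log 2 * u)
          + (1 - Real.log 2 * u) * (Real.exp (Real.log 2 * u) * Real.log 2) - 0) u :=
      (h3.mul h2).sub (hasDerivAt_const u 1)
    rw [h4.deriv]
    have he : 0 < Real.exp (Real.log 2 * u) := Real.exp_pos _
    have hu' : (0:ℝ) < u := hu
    nlinarith [mul_pos (mul_pos hc hc) (mul_pos hu' he)]

/-- For fixed `L, x, W, D > 0` and `μ ≥ 0`, the function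
`v(t) = x [2^{L/(x t)} − (L/(x t)) ln 2 · 2^{L/(x t)} − 1] + μ W/(D − t)²`
is strictly increasing on `(0, D)`. -/
theorem kkt_computing_strictMono (L x W D μ : ℝ) (hL : 0 < L) (hx : 0 < x)
    (hW : 0 < W) (hD : 0 < D) (hμ : 0 ≤ μ) :
    StrictMonoOn
      (fun t : ℝ =>
        x * ((2 : ℝ) ^ (L / (x * t))
          - L / (x * t) * Real.log 2 * (2 : ℝ) ^ (L / (x * t)) - 1)
        + μ * W / (D - t) ^ 2)
      (Set.Ioo 0 D) := by
  intro a ha b hb hab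
  obtain ⟨ha0, haD⟩ := ha
  obtain ⟨hb0, hbD⟩ := hb
  set g : ℝ → ℝ := fun u => (1 - Real.log 2 * u) * Real.exp (Real.log 2 * u) - 1 with hg
  have key : ∀ t : ℝ, 0 < t →
      x * ((2 : ℝ) ^ (L / (x * t))
        - L / (x * t) * Real.log 2 * (2 : ℝ) ^ (L / (x * t)) - 1)
      = x * g (L / (x * t)) := by
    intro t ht
    rw [hg]
    rw [Real.rpow_def_of_pos two_pos]
    ring
  have hua : 0 < L / (x * a) := div_pos hL (mul_pos hx ha0)
  have hub : 0 < L / (x * b) := div_pos hL (mul_pos hx hb0)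
  have hlt : L / (x * b) < L / (x * a) := by
    apply div_lt_div_of_pos_left hL (mul_pos hx ha0)
    exact mul_lt_mul_of_pos_left hab hx
  have h1 : x * g (L / (x * a)) < x * g (L / (x * b)) := by
    apply mul_lt_mul_of_pos_left _ hx
    exact g_strictAntiOn hub hua hlt
  have h2 : μ * W / (D - a) ^ 2 ≤ μ * W / (D - b) ^ 2 := by
    have hda : 0 < D - a := by linarith
    have hdb : 0 < D - b := by linarith
    have hsq : (D - b) ^ 2 ≤ (D - a) ^ 2 := by nlinarith
    exact div_le_div_of_nonneg_left (mul_nonneg hμ hW.le) (by positivity) hsq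
  simp only
  rw [key a ha0, key b hb0]
  linarith
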